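/- Let λ ∈ ℝ, Σ_λ = {x ∈ ℝ^n : x₁ < λ}, and let U : ℝ^n → ℝ be antisymmetric with respect to the reflection x ↦ x^λ = (2λ - x₁, x'), i.e. U(x^λ) = -U(x) for all x. Suppose U ≥ 0 on Σ_λ, U is integrable against the kernel y ↦ |x⁰ - y|^{-n} away from x⁰, and for some x⁰ ∈ Σ_λ one has ∫_{ℝ^n} ( -U(y) / |x⁰ - y|^n ) dy ≥ 0. Then U = 0 almost everywhere on ℝ^n. -/

import Mathlib

open MeasureTheory

noncomputable def reflMap (n : ℕ) [NeZero n] (lam : ℝ) :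
    EuclideanSpace ℝ (Fin n) → EuclideanSpace ℝ (Fin n) :=
  fun x => WithLp.toLp 2 (fun i => if i = 0 then 2 * lam - x 0 else x i)

lemma reflMap_invol (n : ℕ) [NeZero n] (lam : ℝ) (x : EuclideanSpace ℝ (Fin n)) :
    reflMap n lam (reflMap n lam x) = x := by
  ext i
  by_cases h : i = 0
  · subst h; simp [reflMap]
  · simp [reflMap, h]

lemma measurePreserving_reflMap (n : ℕ) [NeZero n] (lam : ℝ) :
    MeasurePreserving (reflMap n lam) volume volume := by
  have hneg : MeasurePreserving (fun t : ℝ => 2 * lam - t) volume volume := by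
    simpa [Function.comp_def, sub_eq_add_neg] using
      (measurePreserving_add_left (volume : Measure ℝ) (2 * lam)).comp
        (Measure.measurePreserving_neg (volume : Measure ℝ))
  have hpi' := volume_preserving_pi (fun i : Fin n =>
    show MeasurePreserving (fun t : ℝ => if i = 0 then 2 * lam - t else t) volume volume by
      by_cases h : i = 0
      · simpa [h] using hneg
      · simp only [h, if_false]; exact MeasurePreserving.id (volume : Measure ℝ))
  have hpi : MeasurePreserving
      (fun (x : Fin n → ℝ) (i : Fin n) => if i = 0 then 2 * lam - x 0 else x i)
      volume volume := by
    have heq : (fun (x : Fin n → ℝ) (i : Fin n) => if i = 0 then 2 * lam - x 0 else x i)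
        = fun (x : Fin n → ℝ) (i : Fin n) => if i = 0 then 2 * lam - x i else x i := by
      funext x i; by_cases h : i = 0 <;> simp [h]
    rw [heq]; exact hpi'
  have e := EuclideanSpace.volume_preserving_symm_measurableEquiv_toLp (Fin n)
  have e' := e.symm (MeasurableEquiv.toLp 2 (Fin n → ℝ)).symm
  have := (e'.comp hpi).comp e
  exact this

lemma ae_ne_hyperplane (n : ℕ) [NeZero n] (c : ℝ) :
    ∀ᵐ y : EuclideanSpace ℝ (Fin n) ∂volume, y 0 ≠ c := by
  have e := EuclideanSpace.volume_preserving_symm_measurableEquiv_toLp (Fin n)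
  have h : ∀ᵐ x : Fin n → ℝ ∂volume, x 0 ≠ c := by
    rw [volume_pi]; exact Measure.ae_eval_ne (fun _ : Fin n => (volume : Measure ℝ)) 0 c
  have := ae_of_ae_map (f := (MeasurableEquiv.toLp 2 (Fin n → ℝ)).symm)
    e.measurable.aemeasurable (by rw [e.map_eq]; exact h)
  exact this

lemma norm_lt_norm_refl (n : ℕ) [NeZero n] (lam : ℝ) (x0 y : EuclideanSpace ℝ (Fin n))
    (hx0 : x0 0 < lam) (hy : y 0 < lam) :
    ‖x0 - y‖ < ‖x0 - reflMap n lam y‖ := by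
  have h1 : ∑ i, ‖(x0 - y) i‖ ^ 2 < ∑ i, ‖(x0 - reflMap n lam y) i‖ ^ 2 := by
    apply Finset.sum_lt_sum
    · intro i _
      by_cases h : i = 0
      · subst h
        simp only [PiLp.sub_apply, reflMap, WithLp.ofLp_toLp, if_pos rfl, ite_true, Real.norm_eq_abs, sq_abs]
        nlinarith [mul_pos (sub_pos.2 hx0) (sub_pos.2 hy)]
      · simp [PiLp.sub_apply, reflMap, h]
    · refine ⟨0, Finset.mem_univ _, ?_⟩
      simp only [PiLp.sub_apply, reflMap, WithLp.ofLp_toLp, if_pos rfl, ite_true, Real.norm_eq_abs, sq_abs]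
      nlinarith [mul_pos (sub_pos.2 hx0) (sub_pos.2 hy)]
  rw [EuclideanSpace.norm_eq, EuclideanSpace.norm_eq]
  exact Real.sqrt_lt_sqrt (by positivity) h1


theorem antisymmetric_nonneg_integral_zero (n : ℕ) [NeZero n] (lam : ℝ)
    (U : EuclideanSpace ℝ (Fin n) → ℝ)
    (hanti : ∀ x : EuclideanSpace ℝ (Fin n),
      U (WithLp.toLp 2 (fun i => if i = 0 then 2 * lam - x 0 else x i)) = -U x)
    (hpos : ∀ x : EuclideanSpace ℝ (Fin n), x 0 < lam → 0 ≤ U x)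
    (x0 : EuclideanSpace ℝ (Fin n)) (hx0 : x0 0 < lam)
    (hint : MeasureTheory.Integrable (fun y => U y / ‖x0 - y‖ ^ (n : ℝ)))
    (hge : (∫ y, -U y / ‖x0 - y‖ ^ (n : ℝ)) ≥ 0) :
    U =ᵐ[volume] 0 := by
  set R := reflMap n lam with hRdef
  have hRmp := measurePreserving_reflMap n lam
  have hR0 : ∀ y : EuclideanSpace ℝ (Fin n), R y 0 = 2 * lam - y 0 := by
    intro y; simp [hRdef, reflMap]
  have hanti' : ∀ y, U (R y) = -U y := fun y => hanti y
  have hRmeas : Measurable R := hRmp.measurable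
  let Re : EuclideanSpace ℝ (Fin n) ≃ᵐ EuclideanSpace ℝ (Fin n) :=
    { toFun := R, invFun := R,
      left_inv := reflMap_invol n lam, right_inv := reflMap_invol n lam,
      measurable_toFun := hRmeas, measurable_invFun := hRmeas }
  have hemb : MeasurableEmbedding R := Re.measurableEmbedding
  have hevalmeas : Measurable (fun y : EuclideanSpace ℝ (Fin n) => y 0) :=
    (measurable_pi_apply 0).comp (MeasurableEquiv.toLp 2 (Fin n → ℝ)).symm.measurable
  set f := fun y : EuclideanSpace ℝ (Fin n) => U y / ‖x0 - y‖ ^ (n : ℝ) with hfdef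
  set S : Set (EuclideanSpace ℝ (Fin n)) := {y | y 0 < lam} with hSdef
  have hSm : MeasurableSet S := measurableSet_lt hevalmeas measurable_const
  have hn : (0 : ℝ) < (n : ℝ) := by exact_mod_cast Nat.pos_of_ne_zero (NeZero.ne n)
  have hx0ne : ∀ᵐ y : EuclideanSpace ℝ (Fin n) ∂volume, y ≠ x0 := by
    filter_upwards [ae_ne_hyperplane n (x0 0)] with y hy h
    exact hy (by rw [h])
  -- total integral is ≤ 0
  have hle : ∫ y, f y ≤ 0 := by
    have heq : (∫ y, -U y / ‖x0 - y‖ ^ (n : ℝ)) = -∫ y, f y := by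
      simp_rw [neg_div]; exact integral_neg _
    rw [heq] at hge; linarith
  have hfR : Integrable (fun y => f (R y)) volume := (hRmp.integrable_comp_emb hemb).2 hint
  have hsplit : ∫ y, f y = (∫ y in S, f y) + ∫ y in Sᶜ, f y :=
    (integral_add_compl hSm hint).symm
  have hpre : R ⁻¹' Sᶜ = {y : EuclideanSpace ℝ (Fin n) | y 0 ≤ lam} := by
    ext y
    simp only [Set.mem_preimage, Set.mem_compl_iff, hSdef, Set.mem_setOf_eq, not_lt, hR0 y]
    constructor <;> intro h <;> linarith
  have hsetae : ({y : EuclideanSpace ℝ (Fin n) | y 0 ≤ lam} : Set _) =ᵐ[volume] S := by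
    rw [Filter.eventuallyEq_set]
    filter_upwards [ae_ne_hyperplane n lam] with y hy
    simp only [Set.mem_setOf_eq, hSdef]
    exact ⟨fun h => lt_of_le_of_ne h hy, fun h => h.le⟩
  have hcomp : ∫ y in Sᶜ, f y = ∫ y in S, f (R y) := by
    rw [← hRmp.setIntegral_preimage_emb hemb f Sᶜ, hpre]
    exact setIntegral_congr_set hsetae
  have key : ∫ y in S, (f y + f (R y)) ≤ 0 := by
    rw [integral_add (hint.restrict (s := S)) (hfR.restrict (s := S))]
    calc (∫ y in S, f y) + ∫ y in S, f (R y)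
        = (∫ y in S, f y) + ∫ y in Sᶜ, f y := by rw [hcomp]
      _ = ∫ y, f y := (hsplit).symm
      _ ≤ 0 := hle
  have hnonneg : 0 ≤ᵐ[volume.restrict S] fun y => f y + f (R y) := by
    rw [Filter.EventuallyLE, ae_restrict_iff' hSm]
    filter_upwards [hx0ne] with y hyne hyS
    have hyS' : y 0 < lam := hyS
    have ha : 0 < ‖x0 - y‖ := by
      rw [norm_sub_pos_iff]; exact fun h => hyne h.symm
    have hab : ‖x0 - y‖ < ‖x0 - R y‖ := norm_lt_norm_refl n lam x0 y hx0 hyS'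
    have hapos : 0 < ‖x0 - y‖ ^ (n : ℝ) := Real.rpow_pos_of_pos ha _
    have hblt : ‖x0 - y‖ ^ (n : ℝ) < ‖x0 - R y‖ ^ (n : ℝ) :=
      Real.rpow_lt_rpow ha.le hab hn
    have hU : 0 ≤ U y := hpos y hyS'
    have h2 : f (R y) = -U y / ‖x0 - R y‖ ^ (n : ℝ) := by
      simp only [hfdef]; rw [hanti' y]
    have hdiv : U y / ‖x0 - R y‖ ^ (n : ℝ) ≤ U y / ‖x0 - y‖ ^ (n : ℝ) := by
      gcongr
    simp only [Pi.zero_apply, hfdef] at *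
    rw [h2, neg_div]
    linarith
  have hzero : ∫ y in S, (f y + f (R y)) = 0 :=
    le_antisymm key (integral_nonneg_of_ae hnonneg)
  have haegz : (fun y => f y + f (R y)) =ᵐ[volume.restrict S] 0 :=
    (integral_eq_zero_iff_of_nonneg_ae hnonneg
      ((hint.restrict (s := S)).add (hfR.restrict (s := S)))).1 hzero
  have hU1 : ∀ᵐ y : EuclideanSpace ℝ (Fin n) ∂volume, y 0 < lam → U y = 0 := by
    have h := (ae_restrict_iff' hSm).1 haegz
    filter_upwards [h, hx0ne] with y hy hyne hyS'
    have hmem : y ∈ S := hyS'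
    have heq0 : f y + f (R y) = 0 := by simpa using hy hmem
    have ha : 0 < ‖x0 - y‖ := by
      rw [norm_sub_pos_iff]; exact fun h => hyne h.symm
    have hab : ‖x0 - y‖ < ‖x0 - R y‖ := norm_lt_norm_refl n lam x0 y hx0 hyS'
    have hapos : 0 < ‖x0 - y‖ ^ (n : ℝ) := Real.rpow_pos_of_pos ha _
    have hblt : ‖x0 - y‖ ^ (n : ℝ) < ‖x0 - R y‖ ^ (n : ℝ) :=
      Real.rpow_lt_rpow ha.le hab hn
    have hbpos : 0 < ‖x0 - R y‖ ^ (n : ℝ) := lt_trans hapos hblt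
    have h2 : f (R y) = -U y / ‖x0 - R y‖ ^ (n : ℝ) := by
      simp only [hfdef]; rw [hanti' y]
    rw [h2] at heq0
    simp only [hfdef] at heq0
    by_contra hne
    have hmul : U y * (‖x0 - y‖ ^ (n : ℝ))⁻¹ = U y * (‖x0 - R y‖ ^ (n : ℝ))⁻¹ := by
      rw [neg_div] at heq0
      rw [← div_eq_mul_inv, ← div_eq_mul_inv]
      linarith
    have hinv : (‖x0 - y‖ ^ (n : ℝ))⁻¹ = (‖x0 - R y‖ ^ (n : ℝ))⁻¹ :=
      mul_left_cancel₀ hne hmul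
    have : ‖x0 - y‖ ^ (n : ℝ) = ‖x0 - R y‖ ^ (n : ℝ) := inv_injective hinv
    exact absurd this (ne_of_lt hblt)
  have hU2 : ∀ᵐ y : EuclideanSpace ℝ (Fin n) ∂volume, lam < y 0 → U y = 0 := by
    have h : ∀ᵐ y : EuclideanSpace ℝ (Fin n) ∂volume, R y 0 < lam → U (R y) = 0 :=
      ae_of_ae_map hRmeas.aemeasurable (by rw [hRmp.map_eq]; exact hU1)
    filter_upwards [h] with y hy hlt
    have hRy : R y 0 < lam := by rw [hR0 y]; linarith
    have := hy hRy
    rw [hanti' y] at this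
    linarith
  filter_upwards [hU1, hU2, ae_ne_hyperplane n lam] with y h1 h2 h3
  rcases lt_trichotomy (y 0) lam with h | h | h
  · simpa using h1 h
  · exact absurd h h3
  · simpa using h2 h
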